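/- Main Edge Elimination Theorem: Let pq be an edge of a TSP instance and let r, s be two distinct potential points with respect to pq, certified by coverings (R₁, R₂) and (S₁, S₂) respectively, with r ∉ S₁ ∪ S₂ and s ∉ R₁ ∪ R₂. If both l(pq) − l(rs) + min_{z∈S₁}(l(sz) − l(pz)) + min_{y∈R₂}(l(ry) − l(qy)) > 0 and l(pq) − l(rs) + min_{x∈R₁}(l(rx) − l(px)) + min_{w∈S₂}(l(sw) − l(qw)) > 0, then no optimum TSP tour contains the edge pq. -/

import Mathlib

set_option linter.unusedSectionVars false
set_option maxHeartbeats 1000000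

/-- A tour (Hamiltonian cycle), encoded as a cyclic permutation with no fixed points. -/
def IsTour {V : Type*} [Fintype V] (σ : Equiv.Perm V) : Prop :=
  σ.IsCycle ∧ ∀ v : V, σ v ≠ v

/-- The length of a tour. -/
noncomputable def tourLength {V : Type*} [Fintype V] (l : V → V → ℝ)
    (σ : Equiv.Perm V) : ℝ :=
  ∑ v, l v (σ v)

/-- An optimum tour: a tour of minimum length. -/
def IsOptimumTour {V : Type*} [Fintype V] (l : V → V → ℝ) (σ : Equiv.Perm V) : Prop :=
  IsTour σ ∧ ∀ τ : Equiv.Perm V, IsTour τ → tourLength l σ ≤ tourLength l τ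

/-- The edge `{a,b}` belongs to the tour `σ`. -/
def edgeIn {V : Type*} [Fintype V] (σ : Equiv.Perm V) (a b : V) : Prop :=
  σ a = b ∨ σ b = a

/-- Edges `pq` and `xy` are compatible. -/
def Compatible {V : Type*} (l : V → V → ℝ) (p q x y : V) : Prop :=
  l p q + l x y ≤ max (l p x + l q y) (l p y + l q x)

/-- `(R₁, R₂)` certifies that `r` is a potential point with respect to the edge `pq`:
the set `R = {x | rx ∈ E and rx compatible with pq}` is covered by `R₁ ∪ R₂`, and in
every optimum tour containing `pq` the two tour-neighbours of `r` do not both lie in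
`R₁`, and do not both lie in `R₂`. -/
def Certifies {V : Type*} [Fintype V] (l : V → V → ℝ) (E : V → V → Prop)
    (p q r : V) (R₁ R₂ : Set V) : Prop :=
  (∀ x : V, E r x → Compatible l p q r x → x ∈ R₁ ∪ R₂) ∧
  ∀ σ : Equiv.Perm V, IsOptimumTour l σ → edgeIn σ p q →
    ¬(σ r ∈ R₁ ∧ σ⁻¹ r ∈ R₁) ∧ ¬(σ r ∈ R₂ ∧ σ⁻¹ r ∈ R₂)

section PathWeight

variable {V : Type*} [DecidableEq V]

/-- Weight of a path: the sum of the lengths of consecutive edges. -/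
noncomputable def pw (l : V → V → ℝ) : List V → ℝ
  | a :: b :: t => l a b + pw l (b :: t)
  | _ => 0

@[simp] lemma pw_nil (l : V → V → ℝ) : pw l [] = 0 := rfl
@[simp] lemma pw_single (l : V → V → ℝ) (a : V) : pw l [a] = 0 := rfl
lemma pw_cons_cons (l : V → V → ℝ) (a b : V) (t : List V) :
    pw l (a :: b :: t) = l a b + pw l (b :: t) := rfl

lemma pw_cons (l : V → V → ℝ) (a : V) (Y : List V) (hY : Y ≠ []) :
    pw l (a :: Y) = l a (Y.head hY) + pw l Y := by
  cases Y with
  | nil => simp at hY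
  | cons b t => rfl

lemma pw_split (l : V → V → ℝ) (X : List V) (a : V) (Y : List V) :
    pw l (X ++ a :: Y) = pw l (X ++ [a]) + pw l (a :: Y) := by
  induction X with
  | nil => simp [pw]
  | cons x X ih =>
    cases X with
    | nil =>
      cases Y with
      | nil => simp [pw]
      | cons b t => simp [pw_cons_cons]
    | cons x' X' =>
      simp only [List.cons_append, pw_cons_cons] at *
      rw [ih]; ring

lemma pw_concat (l : V → V → ℝ) (X : List V) (a : V) (hX : X ≠ []) :
    pw l (X ++ [a]) = pw l X + l (X.getLast hX) a := by
  induction X with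
  | nil => simp at hX
  | cons x X ih =>
    cases X with
    | nil => simp [pw_cons_cons]
    | cons y t =>
      simp only [List.cons_append, pw_cons_cons] at *
      rw [ih (by simp), List.getLast_cons (show y :: t ≠ [] by simp)]
      ring

lemma pw_reverse (l : V → V → ℝ) (hsymm : ∀ a b, l a b = l b a) (X : List V) :
    pw l X.reverse = pw l X := by
  induction X with
  | nil => simp
  | cons x X ih =>
    cases X with
    | nil => simp
    | cons y t =>
      rw [List.reverse_cons, pw_concat l _ x (by simp),
        List.getLast_reverse, ih, pw_cons_cons, List.head_cons, hsymm]
      ring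

lemma pw_bridge (l : V → V → ℝ) (X : List V) (hX : X ≠ []) (a : V) (Y : List V) :
    pw l (X ++ a :: Y) = pw l X + l (X.getLast hX) a + pw l (a :: Y) := by
  rw [pw_split, pw_concat l X a hX]

end PathWeight

section FormPerm

variable {V : Type*} [Fintype V] [DecidableEq V]

lemma sum_toFinset_eq_pw (l : V → V → ℝ) :
    ∀ (L : List V), L.Nodup → ∀ (hne : L ≠ []),
      ∑ v ∈ L.toFinset, l v (L.formPerm v) = pw l (L ++ [L.head hne]) := by
  intro L
  induction L with
  | nil => intro _ h; simp at h
  | cons x xs ih =>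
    intro hL _
    cases xs with
    | nil => simp [pw_cons_cons]
    | cons y t =>
      have hx : x ∉ (y :: t) := (List.nodup_cons.mp hL).1
      have hnd : (y :: t).Nodup := (List.nodup_cons.mp hL).2
      set g := (y :: t).getLast (by simp) with hg
      have hgmem : g ∈ (y :: t) := List.getLast_mem _
      have key : ∀ v ∈ (y :: t),
          ((x :: y :: t).formPerm) v
            = if v = g then x else ((y :: t).formPerm) v := by
        intro v hv
        rw [List.formPerm_cons_cons, Equiv.Perm.mul_apply]
        by_cases hvl : v = g
        · subst hvl
          rw [if_pos rfl, hg, List.formPerm_apply_getLast, Equiv.swap_apply_right]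
        · rw [if_neg hvl]
          have h1 : (y :: t).formPerm v ≠ y := by
            intro h
            apply hvl
            have h2 := List.formPerm_apply_getLast y t
            exact (y :: t).formPerm.injective (by rw [h, ← hg] at *; rw [h2])
          have h2 : (y :: t).formPerm v ≠ x := by
            intro h
            have := List.formPerm_apply_mem_of_mem hv
            rw [h] at this; exact hx this
          exact Equiv.swap_apply_of_ne_of_ne h2 h1
      have hxfp : (x :: y :: t).formPerm x = y := by
        rw [List.formPerm_cons_cons, Equiv.Perm.mul_apply,
          List.formPerm_apply_of_notMem hx, Equiv.swap_apply_left]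
      rw [List.toFinset_cons, Finset.sum_insert (by simpa using hx), hxfp]
      have hsplit : ∑ v ∈ (y :: t).toFinset, l v ((x :: y :: t).formPerm v)
          = ∑ v ∈ (y :: t).toFinset, l v ((y :: t).formPerm v) - l g y + l g x := by
        have hgY : (y :: t).formPerm g = y := by
          rw [hg]; exact List.formPerm_apply_getLast y t
        rw [← Finset.add_sum_erase _ _ (List.mem_toFinset.mpr hgmem),
            ← Finset.add_sum_erase _ (fun v => l v ((y :: t).formPerm v))
              (List.mem_toFinset.mpr hgmem)]
        rw [key g hgmem, if_pos rfl, hgY]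
        have : ∀ v ∈ ((y :: t).toFinset).erase g,
            l v ((x :: y :: t).formPerm v) = l v ((y :: t).formPerm v) := by
          intro v hv
          have hvm := Finset.mem_of_mem_erase hv
          have hvg := Finset.ne_of_mem_erase hv
          rw [key v (List.mem_toFinset.mp hvm), if_neg hvg]
        rw [Finset.sum_congr rfl this]
        ring
      rw [hsplit, ih hnd (by simp)]
      simp only [List.head_cons, List.cons_append, pw_cons_cons]
      have e1 : pw l (y :: (t ++ [y])) = pw l (y :: t) + l g y := by
        rw [show y :: (t ++ [y]) = (y :: t) ++ [y] from rfl, pw_concat l (y::t) y (by simp)]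
      have e2 : pw l (y :: (t ++ [x])) = pw l (y :: t) + l g x := by
        rw [show y :: (t ++ [x]) = (y :: t) ++ [x] from rfl, pw_concat l (y::t) x (by simp)]
      rw [e1, e2]; ring

lemma isTour_formPerm (L : List V) (hnd : L.Nodup) (hcov : ∀ v, v ∈ L)
    (hlen : 2 ≤ L.length) : IsTour L.formPerm := by
  have hsing : ∀ x : V, L ≠ [x] := by
    intro x h; rw [h] at hlen; simp at hlen
  constructor
  · exact List.isCycle_formPerm hnd hlen
  · intro v
    have hv : v ∈ L.toFinset := List.mem_toFinset.mpr (hcov v)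
    rw [← List.support_formPerm_of_nodup L hnd hsing] at hv
    exact Equiv.Perm.mem_support.mp hv

lemma tourLength_formPerm (l : V → V → ℝ) (L : List V) (hnd : L.Nodup)
    (hcov : ∀ v, v ∈ L) (hne : L ≠ []) :
    tourLength l L.formPerm = pw l (L ++ [L.head hne]) := by
  rw [← sum_toFinset_eq_pw l L hnd hne, tourLength]
  congr 1
  exact (Finset.eq_univ_of_forall fun v => List.mem_toFinset.mpr (hcov v)).symm

lemma isOptimumTour_inv (l : V → V → ℝ) (hsymm : ∀ a b, l a b = l b a)
    (σ : Equiv.Perm V) (h : IsOptimumTour l σ) : IsOptimumTour l σ⁻¹ := by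
  obtain ⟨⟨hc, hf⟩, hmin⟩ := h
  have hlen : tourLength l σ⁻¹ = tourLength l σ := by
    rw [tourLength, tourLength]
    rw [← Equiv.sum_comp σ (fun v => l v (σ⁻¹ v))]
    simp only [Equiv.Perm.inv_def, Equiv.symm_apply_apply]
    exact Finset.sum_congr rfl fun v _ => hsymm _ _
  refine ⟨⟨hc.inv, fun v hv => ?_⟩, fun τ ht => by rw [hlen]; exact hmin τ ht⟩
  exact hf v (by conv_lhs => rw [← hv, Equiv.Perm.inv_def, Equiv.apply_symm_apply])

/-- adjacency in a nodup list gives formPerm successor -/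
lemma formPerm_adj (L : List V) (hnd : L.Nodup) (U W : List V) (a b : V)
    (h : L = U ++ a :: b :: W) : L.formPerm a = b := by
  subst h
  have hi : U.length < (U ++ a :: b :: W).length := by simp
  have ha : (U ++ a :: b :: W)[U.length] = a := by
    rw [List.getElem_append_right (le_refl _)]; simp
  have hb : (U ++ a :: b :: W)[U.length + 1]'(by simp) = b := by
    rw [List.getElem_append_right (by omega)]
    simp [Nat.add_sub_cancel_left]
  have hmod : (U.length + 1) % (U ++ a :: b :: W).length = U.length + 1 :=
    Nat.mod_eq_of_lt (by simp)
  have := List.formPerm_apply_getElem _ hnd U.length hi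
  rw [ha] at this
  simp only [hmod] at this
  rw [this, hb]

lemma formPerm_adj_pred (L : List V) (hnd : L.Nodup) (P M rest : List V) (a : V)
    (hM : M ≠ []) (h : L = P ++ (M ++ a :: rest)) :
    L.formPerm (M.getLast hM) = a := by
  refine formPerm_adj L hnd (P ++ M.dropLast) rest (M.getLast hM) a ?_
  rw [h]
  conv_lhs => rw [← List.dropLast_append_getLast hM]
  simp

end FormPerm

section ToList

variable {V : Type*} [Fintype V] [DecidableEq V]

lemma toList_facts (σ : Equiv.Perm V) (hc : σ.IsCycle) (hf : ∀ v, σ v ≠ v) (p : V) :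
    (σ.toList p).Nodup ∧ (σ.toList p).formPerm = σ ∧ (∀ v, v ∈ σ.toList p) := by
  refine ⟨Equiv.Perm.nodup_toList σ p, ?_, ?_⟩
  · rw [Equiv.Perm.formPerm_toList, Equiv.Perm.IsCycle.cycleOf_eq hc (hf p)]
  · intro v
    rw [Equiv.Perm.mem_toList_iff]
    exact ⟨hc.sameCycle (hf p) (hf v), Equiv.Perm.mem_support.mpr (hf p)⟩

lemma toList_two (σ : Equiv.Perm V) (hf : ∀ v, σ v ≠ v) (p q : V)
    (hpq : σ p = q) : ∃ rest, σ.toList p = p :: q :: rest := by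
  have hsup : p ∈ σ.support := Equiv.Perm.mem_support.mpr (hf p)
  have hlen : 2 ≤ (σ.toList p).length :=
    Equiv.Perm.two_le_length_toList_iff_mem_support.mpr hsup
  obtain ⟨a, t1, h1⟩ := List.exists_cons_of_ne_nil
    (show σ.toList p ≠ [] by intro h; rw [h] at hlen; simp at hlen)
  obtain ⟨b, t2, h2⟩ := List.exists_cons_of_ne_nil
    (show t1 ≠ [] by intro h; rw [h] at h1; rw [h1] at hlen; simp at hlen)
  refine ⟨t2, ?_⟩
  have hTe : σ.toList p = a :: b :: t2 := by rw [h1, h2]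
  have h0 : (σ.toList p).get ⟨0, by omega⟩ = (σ ^ 0) p :=
    Equiv.Perm.getElem_toList σ p 0 (by omega)
  have h1' : (σ.toList p).get ⟨1, by omega⟩ = (σ ^ 1) p :=
    Equiv.Perm.getElem_toList σ p 1 (by omega)
  simp [hTe] at h0 h1'
  rw [hTe, h0, h1', hpq]

end ToList

section Compat

variable {V : Type*} [Fintype V] [DecidableEq V]

lemma compat_succ (l : V → V → ℝ) (hsymm : ∀ a b, l a b = l b a)
    (σ : Equiv.Perm V) (hopt : IsOptimumTour l σ) (p q t : V) (hσp : σ p = q)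
    (htp : t ≠ p) (htq : t ≠ q) : Compatible l p q t (σ t) := by
  obtain ⟨⟨hc, hf⟩, hmin⟩ := hopt
  by_cases hsp : σ t = p
  · rw [hsp, Compatible]
    refine le_trans (le_of_eq ?_) (le_max_left _ _)
    rw [hsymm t p, hsymm p q]; ring
  obtain ⟨hnd, hform, hcov⟩ := toList_facts σ hc hf p
  obtain ⟨rest, hT⟩ := toList_two σ hf p q hσp
  have htmem : t ∈ rest := by
    have := hcov t
    rw [hT] at this
    simp only [List.mem_cons] at this
    rcases this with h|h|h
    · exact absurd h htp
    · exact absurd h htq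
    · exact h
  obtain ⟨X, Y, hrest⟩ := List.append_of_mem htmem
  have hY : Y ≠ [] := by
    intro h
    apply hsp
    have hsh : p :: q :: rest = (p :: q :: X) ++ [t] := by rw [hrest, h]; simp
    have h2 := List.formPerm_apply_getLast p (q :: rest)
    have hlast : (p :: q :: rest).getLast (by simp) = t := by
      simp only [hsh]
      simp [List.getLast_append]
    rw [hlast] at h2
    rw [← hform, hT]
    exact h2
  obtain ⟨y, Y', hY'⟩ := List.exists_cons_of_ne_nil hY
  have hTfull : σ.toList p = (p :: q :: X) ++ t :: y :: Y' := by
    rw [hT, hrest, hY']; simp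
  have hσt : σ t = y := by rw [← hform]; exact formPerm_adj _ hnd _ _ _ _ hTfull
  -- the 2-opt exchange
  set M := (q :: X ++ [t] : List V) with hM
  have hMne : M ≠ [] := by simp [hM]
  set L' := (p :: (M.reverse ++ y :: Y') : List V) with hL'
  have hperm : List.Perm L' (σ.toList p) := by
    rw [hL', hTfull]
    refine List.Perm.cons p ?_
    have hstep : List.Perm (M.reverse ++ y :: Y') (M ++ y :: Y') :=
      List.Perm.append_right _ (List.reverse_perm M)
    have heq : M ++ y :: Y' = (q :: X) ++ t :: y :: Y' := by simp [hM]
    rw [heq] at hstep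
    exact hstep
  have hnd' : L'.Nodup := hperm.nodup_iff.mpr hnd
  have hcov' : ∀ v, v ∈ L' := fun v => hperm.mem_iff.mpr (hcov v)
  have hlen' : 2 ≤ L'.length := by
    rw [hperm.length_eq, hTfull]; simp
  have htour := isTour_formPerm L' hnd' hcov' hlen'
  have hle := hmin _ htour
  rw [tourLength_formPerm l L' hnd' hcov' (by simp [hL'])] at hle
  rw [show tourLength l σ = tourLength l (σ.toList p).formPerm by rw [hform]] at hle
  rw [tourLength_formPerm l _ hnd hcov (by rw [hT]; simp)] at hle
  -- compute both path weights
  have hheadT : (σ.toList p).head (by rw [hT]; simp) = p := by simp [hT]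
  have hheadL : L'.head (by simp [hL']) = p := by simp [hL']
  rw [hheadT, hheadL] at hle
  have hTp : σ.toList p ++ [p] = [p] ++ M ++ y :: (Y' ++ [p]) := by
    rw [hTfull, hM]; simp
  have hLp : L' ++ [p] = [p] ++ M.reverse ++ y :: (Y' ++ [p]) := by
    rw [hL']; simp
  rw [hTp, hLp] at hle
  rw [pw_split l ([p] ++ M) y (Y' ++ [p]), pw_split l ([p] ++ M.reverse) y (Y' ++ [p])] at hle
  have e1 : pw l ([p] ++ M ++ [y]) = pw l ([p] ++ M) + l t y := by
    rw [pw_concat l ([p] ++ M) y (by simp [hM])]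
    congr 2
    rw [List.getLast_append]
    simp [hM]
  have e2 : pw l ([p] ++ M.reverse ++ [y]) = pw l ([p] ++ M.reverse) + l q y := by
    rw [pw_concat l ([p] ++ M.reverse) y (by simp [hM])]
    congr 2
    rw [List.getLast_append]
    simp [hM, List.getLast_reverse]
  have e3 : pw l ([p] ++ M) = l p q + pw l M := by
    rw [show ([p] ++ M : List V) = p :: M by simp, pw_cons l p M hMne]
    simp [hM]
  have e4 : pw l ([p] ++ M.reverse) = l p t + pw l M := by
    rw [show ([p] ++ M.reverse : List V) = p :: M.reverse by simp,
      pw_cons l p M.reverse (by simp [hM]), pw_reverse l hsymm]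
    congr 2
    rw [List.head_reverse]
    simp [hM, List.getLast_append]
  rw [e1, e2, e3, e4] at hle
  rw [Compatible, hσt]
  refine le_trans ?_ (le_max_left _ _)
  linarith

lemma compat_pred (l : V → V → ℝ) (hsymm : ∀ a b, l a b = l b a)
    (σ : Equiv.Perm V) (hopt : IsOptimumTour l σ) (p q t : V) (hσp : σ p = q)
    (htp : t ≠ p) (htq : t ≠ q) : Compatible l p q t (σ⁻¹ t) := by
  have hinv : σ⁻¹ q = p := by rw [← hσp]; simp
  have h := compat_succ l hsymm σ⁻¹ (isOptimumTour_inv l hsymm σ hopt) q p t hinv htq htp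
  rw [Compatible] at h ⊢
  rw [hsymm q p, add_comm (l q t) (l p (σ⁻¹ t)), add_comm (l q (σ⁻¹ t)) (l p t),
    max_comm] at h
  exact h

end Compat

section Core

variable {V : Type*} [Fintype V] [DecidableEq V]

lemma neighbors_mem (l : V → V → ℝ) (hsymm : ∀ a b, l a b = l b a)
    (E : V → V → Prop) (hEsymm : ∀ a b, E a b → E b a)
    (hE : ∀ σ : Equiv.Perm V, IsOptimumTour l σ → ∀ v : V, E v (σ v))
    (σ : Equiv.Perm V) (hopt : IsOptimumTour l σ) (p q t : V) (hσp : σ p = q)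
    (htp : t ≠ p) (htq : t ≠ q) (R₁ R₂ : Finset V)
    (hpot : Certifies l E p q t ↑R₁ ↑R₂) :
    (σ t ∈ R₁ ∧ σ⁻¹ t ∈ R₂) ∨ (σ t ∈ R₂ ∧ σ⁻¹ t ∈ R₁) := by
  have hv : σ t ∈ (↑R₁ ∪ ↑R₂ : Set V) :=
    hpot.1 _ (hE σ hopt t) (compat_succ l hsymm σ hopt p q t hσp htp htq)
  have hEpred : E t (σ⁻¹ t) := by
    have := hE σ hopt (σ⁻¹ t)
    rw [Equiv.Perm.inv_def, Equiv.apply_symm_apply] at this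
    exact hEsymm _ _ this
  have hu : σ⁻¹ t ∈ (↑R₁ ∪ ↑R₂ : Set V) :=
    hpot.1 _ hEpred (compat_pred l hsymm σ hopt p q t hσp htp htq)
  have hno := hpot.2 σ hopt (Or.inl hσp)
  simp only [Set.mem_union, Finset.mem_coe] at hv hu hno
  tauto

lemma succ_mem_cover (l : V → V → ℝ) (hsymm : ∀ a b, l a b = l b a)
    (E : V → V → Prop)
    (hE : ∀ σ : Equiv.Perm V, IsOptimumTour l σ → ∀ v : V, E v (σ v))
    (σ : Equiv.Perm V) (hopt : IsOptimumTour l σ) (p q t : V) (hσp : σ p = q)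
    (htp : t ≠ p) (htq : t ≠ q) (R₁ R₂ : Finset V)
    (hpot : Certifies l E p q t ↑R₁ ↑R₂) :
    σ t ∈ R₁ ∪ R₂ := by
  have hv : σ t ∈ (↑R₁ ∪ ↑R₂ : Set V) :=
    hpot.1 _ (hE σ hopt t) (compat_succ l hsymm σ hopt p q t hσp htp htq)
  simp only [Set.mem_union, Finset.mem_coe] at hv
  simpa [Finset.mem_union] using hv

lemma core_case (l : V → V → ℝ) (hsymm : ∀ a b, l a b = l b a)
    (E : V → V → Prop) (hEsymm : ∀ a b, E a b → E b a)
    (hE : ∀ σ : Equiv.Perm V, IsOptimumTour l σ → ∀ v : V, E v (σ v))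
    (p q r s : V) (hrs : r ≠ s)
    (hrp : r ≠ p) (hrq : r ≠ q) (hsp : s ≠ p) (hsq : s ≠ q)
    (R₁ R₂ S₁ S₂ : Finset V)
    (hR₁ : R₁.Nonempty) (hR₂ : R₂.Nonempty) (hS₁ : S₁.Nonempty) (hS₂ : S₂.Nonempty)
    (hrpot : Certifies l E p q r ↑R₁ ↑R₂)
    (hspot : Certifies l E p q s ↑S₁ ↑S₂)
    (hsnot : s ∉ R₁ ∪ R₂)
    (h1 : 0 < l p q - l r s + S₁.inf' hS₁ (fun z => l s z - l p z)
            + R₂.inf' hR₂ (fun y => l r y - l q y))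
    (h2 : 0 < l p q - l r s + R₁.inf' hR₁ (fun x => l r x - l p x)
            + S₂.inf' hS₂ (fun w => l s w - l q w))
    (σ : Equiv.Perm V) (hopt : IsOptimumTour l σ) (hσp : σ p = q)
    (A B C : List V)
    (hT : σ.toList p = p :: q :: (A ++ r :: (B ++ s :: C))) : False := by
  obtain ⟨⟨hc, hf⟩, hmin⟩ := hopt
  have hopt' : IsOptimumTour l σ := ⟨⟨hc, hf⟩, hmin⟩
  obtain ⟨hnd, hform, hcov⟩ := toList_facts σ hc hf p
  -- B is nonempty
  have hBne : B ≠ [] := by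
    intro hB
    subst hB
    apply hsnot
    have hσrs : σ r = s := by
      rw [← hform]
      exact formPerm_adj _ hnd (p :: q :: A) C r s (by rw [hT]; simp)
    have hsmem : s ∈ (↑R₁ ∪ ↑R₂ : Set V) := by
      rw [← hσrs]
      exact hrpot.1 _ (hE σ hopt' r) (compat_succ l hsymm σ hopt' p q r hσp hrp hrq)
    simp only [Set.mem_union, Finset.mem_coe] at hsmem
    simpa [Finset.mem_union] using hsmem
  obtain ⟨b, B', hB'⟩ := List.exists_cons_of_ne_nil hBne
  subst hB'
  have hσrb : σ r = b := by
    rw [← hform]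
    exact formPerm_adj _ hnd (p :: q :: A) (B' ++ s :: C) r b (by rw [hT]; simp)
  -- last elements of the two inner segments
  set u := (q :: A).getLast (by simp) with hu
  set c' := (b :: B').getLast (by simp) with hc'
  have hAu : (q :: A).dropLast ++ [u] = q :: A := List.dropLast_append_getLast _
  have hBc : (b :: B').dropLast ++ [c'] = b :: B' := List.dropLast_append_getLast _
  have hσu : σ u = r := by
    rw [← hform, hu]
    exact formPerm_adj_pred _ hnd [p] (q :: A) (b :: B' ++ s :: C) r (by simp)
      (by simp [hT])
  have hσc : σ c' = s := by
    rw [← hform, hc']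
    exact formPerm_adj_pred _ hnd (p :: q :: A ++ [r]) (b :: B') C s (by simp)
      (by simp [hT])
  set D := (C ++ [p] : List V) with hD
  have hDne : D ≠ [] := by simp [hD]
  set d' := D.head hDne with hd'
  have hDd : D = d' :: D.tail := (List.cons_head_tail hDne).symm
  have hσs : σ s = d' := by
    cases C with
    | nil =>
      have hsh : σ.toList p = p :: (q :: (A ++ r :: (b :: B' ++ [s]))) := by
        rw [hT]
      have h2 := List.formPerm_apply_getLast p (q :: (A ++ r :: (b :: B' ++ [s])))
      have hlast : (p :: (q :: (A ++ r :: (b :: B' ++ [s])))).getLast (by simp) = s := by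
        have : p :: (q :: (A ++ r :: (b :: B' ++ [s])))
            = (p :: q :: A ++ r :: b :: B') ++ [s] := by simp
        simp only [this]
        simp [List.getLast_append]
      rw [hlast] at h2
      rw [← hform, hsh]
      simp only [hd', hD]
      simpa using h2
    | cons c C' =>
      have : σ s = c := by
        rw [← hform]
        exact formPerm_adj _ hnd (p :: q :: A ++ r :: b :: B') C' s c (by rw [hT]; simp)
      rw [this]
      simp [hd', hD]
  have hinvr : σ⁻¹ r = u := by rw [← hσu]; simp
  have hinvs : σ⁻¹ s = c' := by rw [← hσc]; simp
  -- neighbour memberships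
  have hrmem := neighbors_mem l hsymm E hEsymm hE σ hopt' p q r hσp hrp hrq R₁ R₂ hrpot
  have hsmem := neighbors_mem l hsymm E hEsymm hE σ hopt' p q s hσp hsp hsq S₁ S₂ hspot
  rw [hσrb, hinvr] at hrmem
  rw [hσs, hinvs] at hsmem
  -- the glue construction
  have glue : ∀ Z : List V,
      List.Perm Z (((q :: A) ++ r :: (b :: B')) ++ [s]) →
      pw l (σ.toList p ++ [p]) ≤ pw l (p :: (Z ++ D)) := by
    intro Z hperm
    set K := (((q :: A) ++ r :: (b :: B')) ++ [s] : List V) with hK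
    have hTK : σ.toList p = p :: (K ++ C) := by rw [hT, hK]; simp
    set L' := (p :: (Z ++ C) : List V) with hL'
    have hperm' : List.Perm L' (σ.toList p) := by
      rw [hL', hTK]
      exact List.Perm.cons p (List.Perm.append_right C hperm)
    have hnd' : L'.Nodup := hperm'.nodup_iff.mpr hnd
    have hcov' : ∀ v, v ∈ L' := fun v => hperm'.mem_iff.mpr (hcov v)
    have hlen' : 2 ≤ L'.length := by
      rw [hperm'.length_eq, hTK, hK]; simp
    have htour := isTour_formPerm L' hnd' hcov' hlen'
    have hle := hmin _ htour
    rw [tourLength_formPerm l L' hnd' hcov' (by simp [hL'])] at hle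
    rw [show tourLength l σ = tourLength l (σ.toList p).formPerm by rw [hform]] at hle
    rw [tourLength_formPerm l _ hnd hcov (by rw [hT]; simp)] at hle
    have hheadT : (σ.toList p).head (by rw [hT]; simp) = p := by simp [hT]
    have hheadL : L'.head (by simp [hL']) = p := by simp [hL']
    rw [hheadT, hheadL] at hle
    have : L' ++ [p] = p :: (Z ++ D) := by rw [hL', hD]; simp
    rwa [this] at hle
  -- head-exposed forms of the reversed blocks
  have hMrev : (q :: A).reverse = u :: (q :: A).dropLast.reverse := by
    conv_lhs => rw [← hAu]
    simp
  have hNrev : (b :: B').reverse = c' :: (b :: B').dropLast.reverse := by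
    conv_lhs => rw [← hBc]
    simp
  have hMrevLast : ∀ h, (u :: (q :: A).dropLast.reverse).getLast h = q := by
    intro h
    simp only [← hMrev]
    simp [List.getLast_reverse]
  have hNrevLast : ∀ h, (c' :: (b :: B').dropLast.reverse).getLast h = b := by
    intro h
    simp only [← hNrev]
    simp [List.getLast_reverse]
  have hpwMrev : pw l (u :: (q :: A).dropLast.reverse) = pw l (q :: A) := by
    rw [← hMrev, pw_reverse l hsymm]
  have hpwNrev : pw l (c' :: (b :: B').dropLast.reverse) = pw l (b :: B') := by
    rw [← hNrev, pw_reverse l hsymm]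
  have hsD : pw l (s :: D) = l s d' + pw l D := by
    rw [hDd]; rfl
  have hMlast : ∀ h, (q :: A).getLast h = u := fun h => rfl
  have hNlast : ∀ h, (b :: B').getLast h = c' := fun h => rfl
  -- weight of the original tour
  have hO : pw l (σ.toList p ++ [p])
      = l p q + pw l (q :: A) + l u r + l r b + pw l (b :: B') + l c' s + l s d'
        + pw l D := by
    rw [show σ.toList p ++ [p] = [p] ++ q :: (A ++ r :: (b :: (B' ++ s :: D))) from by
      simp [hT, hD]]
    rw [pw_bridge l [p] (by simp) q (A ++ r :: (b :: (B' ++ s :: D)))]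
    rw [show (q :: (A ++ r :: (b :: (B' ++ s :: D))) : List V)
        = (q :: A) ++ r :: (b :: (B' ++ s :: D)) from by simp]
    rw [pw_bridge l (q :: A) (by simp) r (b :: (B' ++ s :: D))]
    rw [pw_cons_cons l r b (B' ++ s :: D)]
    rw [show (b :: (B' ++ s :: D) : List V) = (b :: B') ++ s :: D from by simp]
    rw [pw_bridge l (b :: B') (by simp) s D]
    rw [hsD, hMlast, hNlast]
    simp
    ring
  rcases hrmem with ⟨hbR1, huR2⟩ | ⟨hbR2, huR1⟩ <;>
      rcases hsmem with ⟨hdS1, hcS2⟩ | ⟨hdS2, hcS1⟩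
  -- case 1: b ∈ R₁, c' ∈ S₂ : use Z1 = N ++ M ++ [r,s] with h2
  · have hp : List.Perm ((b :: B') ++ (q :: A) ++ [r, s])
        (((q :: A) ++ r :: (b :: B')) ++ [s]) := by
      rw [List.perm_iff_count]
      intro v
      simp [List.count_append, List.count_cons]
      omega
    have hle := glue _ hp
    have hZ : pw l (p :: (((b :: B') ++ (q :: A) ++ [r, s]) ++ D))
        = l p b + pw l (b :: B') + l c' q + pw l (q :: A) + l u r + l r s + l s d'
          + pw l D := by
      rw [show (p :: (((b :: B') ++ (q :: A) ++ [r, s]) ++ D) : List V)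
          = [p] ++ b :: (B' ++ (q :: (A ++ r :: (s :: D)))) from by simp]
      rw [pw_bridge l [p] (by simp) b (B' ++ (q :: (A ++ r :: (s :: D))))]
      rw [show (b :: (B' ++ (q :: (A ++ r :: (s :: D)))) : List V)
          = (b :: B') ++ q :: (A ++ r :: (s :: D)) from by simp]
      rw [pw_bridge l (b :: B') (by simp) q (A ++ r :: (s :: D))]
      rw [show (q :: (A ++ r :: (s :: D)) : List V) = (q :: A) ++ r :: (s :: D) from by simp]
      rw [pw_bridge l (q :: A) (by simp) r (s :: D)]
      rw [pw_cons_cons l r s D, hsD, hMlast, hNlast]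
      simp
      ring
    rw [hO, hZ] at hle
    have i1 : R₁.inf' hR₁ (fun x => l r x - l p x) ≤ l r b - l p b :=
      Finset.inf'_le _ hbR1
    have i2 : S₂.inf' hS₂ (fun w => l s w - l q w) ≤ l s c' - l q c' :=
      Finset.inf'_le _ hcS2
    have e1 := hsymm c' s
    have e2 := hsymm c' q
    linarith
  -- case 2: b ∈ R₁, d' ∈ S₂ : use Z3 = N ++ [s,r] ++ M.reverse with h2
  · have hp : List.Perm ((b :: B') ++ [s, r] ++ (q :: A).reverse)
        (((q :: A) ++ r :: (b :: B')) ++ [s]) := by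
      rw [List.perm_iff_count]
      intro v
      simp [List.count_append, List.count_cons, List.count_reverse]
      omega
    have hle := glue _ hp
    have hZ : pw l (p :: (((b :: B') ++ [s, r] ++ (q :: A).reverse) ++ D))
        = l p b + pw l (b :: B') + l c' s + l s r + l r u + pw l (q :: A) + l q d'
          + pw l D := by
      rw [show (p :: (((b :: B') ++ [s, r] ++ (q :: A).reverse) ++ D) : List V)
          = [p] ++ b :: (B' ++ (s :: (r :: ((q :: A).reverse ++ D)))) from by simp]
      rw [pw_bridge l [p] (by simp) b (B' ++ (s :: (r :: ((q :: A).reverse ++ D))))]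
      rw [show (b :: (B' ++ (s :: (r :: ((q :: A).reverse ++ D)))) : List V)
          = (b :: B') ++ s :: (r :: ((q :: A).reverse ++ D)) from by simp]
      rw [pw_bridge l (b :: B') (by simp) s (r :: ((q :: A).reverse ++ D))]
      rw [pw_cons_cons l s r ((q :: A).reverse ++ D)]
      rw [hMrev, List.cons_append]
      rw [pw_cons_cons l r u ((q :: A).dropLast.reverse ++ D)]
      rw [show (u :: ((q :: A).dropLast.reverse ++ D) : List V)
          = (u :: (q :: A).dropLast.reverse) ++ D from by simp]
      rw [hDd]
      rw [pw_bridge l (u :: (q :: A).dropLast.reverse) (by simp) d' D.tail]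
      rw [hMrevLast, hpwMrev, hNlast]
      rw [show pw l (d' :: D.tail) = pw l D from by rw [← hDd]]
      simp
      ring
    rw [hO, hZ] at hle
    have i1 : R₁.inf' hR₁ (fun x => l r x - l p x) ≤ l r b - l p b :=
      Finset.inf'_le _ hbR1
    have i2 : S₂.inf' hS₂ (fun w => l s w - l q w) ≤ l s d' - l q d' :=
      Finset.inf'_le _ hdS2
    have e1 := hsymm s r
    have e2 := hsymm c' s
    have e3 := hsymm u r
    linarith
  -- case 3: u ∈ R₁, c' ∈ S₂ : use Z4 = M.reverse ++ N.reverse ++ [r,s] with h2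
  · have hp : List.Perm ((q :: A).reverse ++ (b :: B').reverse ++ [r, s])
        (((q :: A) ++ r :: (b :: B')) ++ [s]) := by
      rw [List.perm_iff_count]
      intro v
      simp [List.count_append, List.count_cons, List.count_reverse]
      omega
    have hle := glue _ hp
    have hZ : pw l (p :: (((q :: A).reverse ++ (b :: B').reverse ++ [r, s]) ++ D))
        = l p u + pw l (q :: A) + l q c' + pw l (b :: B') + l b r + l r s + l s d'
          + pw l D := by
      rw [show (p :: (((q :: A).reverse ++ (b :: B').reverse ++ [r, s]) ++ D) : List V)
          = [p] ++ ((q :: A).reverse ++ ((b :: B').reverse ++ (r :: (s :: D)))) from by simp]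
      rw [hMrev, hNrev]
      rw [show ([p] ++ ((u :: (q :: A).dropLast.reverse)
            ++ ((c' :: (b :: B').dropLast.reverse) ++ (r :: (s :: D)))) : List V)
          = p :: (u :: (q :: A).dropLast.reverse)
            ++ c' :: ((b :: B').dropLast.reverse ++ (r :: (s :: D))) from by simp]
      rw [pw_bridge l (p :: (u :: (q :: A).dropLast.reverse)) (by simp) c'
        ((b :: B').dropLast.reverse ++ (r :: (s :: D)))]
      rw [show (c' :: ((b :: B').dropLast.reverse ++ (r :: (s :: D))) : List V)
          = (c' :: (b :: B').dropLast.reverse) ++ r :: (s :: D) from by simp]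
      rw [pw_bridge l (c' :: (b :: B').dropLast.reverse) (by simp) r (s :: D)]
      rw [pw_cons_cons l r s D, hsD]
      rw [pw_cons l p (u :: (q :: A).dropLast.reverse) (by simp)]
      rw [hpwMrev, hpwNrev, hNrevLast]
      rw [List.getLast_cons (by simp), hMrevLast]
      simp
      ring
    rw [hO, hZ] at hle
    have i1 : R₁.inf' hR₁ (fun x => l r x - l p x) ≤ l r u - l p u :=
      Finset.inf'_le _ huR1
    have i2 : S₂.inf' hS₂ (fun w => l s w - l q w) ≤ l s c' - l q c' :=
      Finset.inf'_le _ hcS2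
    have e1 := hsymm u r
    have e2 := hsymm c' s
    have e3 := hsymm b r
    have e4 := hsymm q c'
    linarith
  -- case 4: c' ∈ S₁, b ∈ R₂ : use Z2 = N.reverse ++ M ++ [r,s] with h1
  · have hp : List.Perm ((b :: B').reverse ++ (q :: A) ++ [r, s])
        (((q :: A) ++ r :: (b :: B')) ++ [s]) := by
      rw [List.perm_iff_count]
      intro v
      simp [List.count_append, List.count_cons, List.count_reverse]
      omega
    have hle := glue _ hp
    have hZ : pw l (p :: (((b :: B').reverse ++ (q :: A) ++ [r, s]) ++ D))
        = l p c' + pw l (b :: B') + l b q + pw l (q :: A) + l u r + l r s + l s d'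
          + pw l D := by
      rw [show (p :: (((b :: B').reverse ++ (q :: A) ++ [r, s]) ++ D) : List V)
          = [p] ++ ((b :: B').reverse ++ (q :: (A ++ (r :: (s :: D))))) from by simp]
      rw [hNrev]
      rw [show ([p] ++ ((c' :: (b :: B').dropLast.reverse)
            ++ (q :: (A ++ (r :: (s :: D))))) : List V)
          = (p :: (c' :: (b :: B').dropLast.reverse)) ++ q :: (A ++ (r :: (s :: D)))
            from by simp]
      rw [pw_bridge l (p :: (c' :: (b :: B').dropLast.reverse)) (by simp) q
        (A ++ (r :: (s :: D)))]
      rw [show (q :: (A ++ (r :: (s :: D))) : List V) = (q :: A) ++ r :: (s :: D)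
        from by simp]
      rw [pw_bridge l (q :: A) (by simp) r (s :: D)]
      rw [pw_cons_cons l r s D, hsD]
      rw [pw_cons l p (c' :: (b :: B').dropLast.reverse) (by simp)]
      rw [hpwNrev, hMlast]
      rw [List.getLast_cons (by simp), hNrevLast]
      simp
      ring
    rw [hO, hZ] at hle
    have i1 : S₁.inf' hS₁ (fun z => l s z - l p z) ≤ l s c' - l p c' :=
      Finset.inf'_le _ hcS1
    have i2 : R₂.inf' hR₂ (fun y => l r y - l q y) ≤ l r b - l q b :=
      Finset.inf'_le _ hbR2
    have e1 := hsymm c' s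
    have e2 := hsymm p c'
    have e3 := hsymm b q
    linarith

end Core

/-- **Main Edge Elimination Theorem.** -/
theorem main_edge_elimination {V : Type*} [Fintype V] [DecidableEq V]
    (l : V → V → ℝ) (hsymm : ∀ a b, l a b = l b a) (hnonneg : ∀ a b, 0 ≤ l a b)
    (E : V → V → Prop) (hEsymm : ∀ a b, E a b → E b a)
    (hE : ∀ σ : Equiv.Perm V, IsOptimumTour l σ → ∀ v : V, E v (σ v))
    (p q r s : V) (hpqE : E p q) (hrs : r ≠ s)
    (hrp : r ≠ p) (hrq : r ≠ q) (hsp : s ≠ p) (hsq : s ≠ q)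
    (R₁ R₂ S₁ S₂ : Finset V)
    (hR₁ : R₁.Nonempty) (hR₂ : R₂.Nonempty) (hS₁ : S₁.Nonempty) (hS₂ : S₂.Nonempty)
    (hrpot : Certifies l E p q r ↑R₁ ↑R₂)
    (hspot : Certifies l E p q s ↑S₁ ↑S₂)
    (hrnot : r ∉ S₁ ∪ S₂) (hsnot : s ∉ R₁ ∪ R₂)
    (h1 : 0 < l p q - l r s + S₁.inf' hS₁ (fun z => l s z - l p z)
            + R₂.inf' hR₂ (fun y => l r y - l q y))
    (h2 : 0 < l p q - l r s + R₁.inf' hR₁ (fun x => l r x - l p x)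
            + S₂.inf' hS₂ (fun w => l s w - l q w)) :
    ∀ σ : Equiv.Perm V, IsOptimumTour l σ → ¬ edgeIn σ p q := by
  intro σ hopt hedge
  suffices h : ∀ τ : Equiv.Perm V, IsOptimumTour l τ → τ p = q → False by
    rcases hedge with h' | h'
    · exact h σ hopt h'
    · refine h σ⁻¹ (isOptimumTour_inv l hsymm σ hopt) ?_
      rw [← h']; simp
  intro τ hopt' hτp
  obtain ⟨hc, hf⟩ := hopt'.1
  obtain ⟨rest, hT⟩ := toList_two τ hf p q hτp
  obtain ⟨hnd, hform, hcov⟩ := toList_facts τ hc hf p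
  have hrmem : r ∈ rest := by
    have := hcov r
    rw [hT] at this
    simp only [List.mem_cons] at this
    rcases this with h' | h' | h'
    · exact absurd h' hrp
    · exact absurd h' hrq
    · exact h'
  obtain ⟨X, Y, hXY⟩ := List.append_of_mem hrmem
  have hsmem : s ∈ rest := by
    have := hcov s
    rw [hT] at this
    simp only [List.mem_cons] at this
    rcases this with h' | h' | h'
    · exact absurd h' hsp
    · exact absurd h' hsq
    · exact h'
  rw [hXY, List.mem_append, List.mem_cons] at hsmem
  rcases hsmem with hsX | hsr | hsY
  · -- s comes before r : apply the core case with the roles of r and s swapped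
    obtain ⟨X1, X2, hX⟩ := List.append_of_mem hsX
    have h1' : 0 < l p q - l s r + R₁.inf' hR₁ (fun z => l r z - l p z)
        + S₂.inf' hS₂ (fun y => l s y - l q y) := by
      rw [hsymm s r]; exact h2
    have h2' : 0 < l p q - l s r + S₁.inf' hS₁ (fun x => l s x - l p x)
        + R₂.inf' hR₂ (fun w => l r w - l q w) := by
      rw [hsymm s r]; exact h1
    exact core_case l hsymm E hEsymm hE p q s r hrs.symm hsp hsq hrp hrq
      S₁ S₂ R₁ R₂ hS₁ hS₂ hR₁ hR₂ hspot hrpot hrnot h1' h2' τ hopt' hτp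
      X1 X2 Y (by rw [hT, hXY, hX]; simp)
  · exact hrs hsr.symm
  · -- r comes before s
    obtain ⟨Y1, Y2, hY⟩ := List.append_of_mem hsY
    exact core_case l hsymm E hEsymm hE p q r s hrs hrp hrq hsp hsq
      R₁ R₂ S₁ S₂ hR₁ hR₂ hS₁ hS₂ hrpot hspot hsnot h1 h2 τ hopt' hτp
      X Y1 Y2 (by rw [hT, hXY, hY])
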